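/- Let ν be a symmetric Lévy measure on ℝⁿ, let Ω′ ⊆ Ω ⊆ ℝⁿ be nonempty bounded open sets, let f ∈ L²(Ω), and let u ∈ V_ν^Ω(ℝⁿ) satisfy ⟨u,φ⟩_ν = ∫_Ω f φ dx for every φ ∈ H_ν^Ω(ℝⁿ). Then u ∈ V_ν^{Ω′}(ℝⁿ) and ⟨u,ψ⟩_ν = ∫_{Ω′} f ψ dx for every ψ ∈ H_ν^{Ω′}(ℝⁿ); i.e. weak solutions in Ω are weak solutions in every open subset Ω′ of Ω. -/

import Mathlib

open MeasureTheory Filter Set Topology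
open scoped ENNReal Topology Pointwise Classical

noncomputable section

abbrev Eucl (n : ℕ) : Type := EuclideanSpace ℝ (Fin n)

/-- A symmetric Lévy measure on ℝⁿ: ν({0}) = 0, ν(−A) = ν(A) for Borel A, and
∫ min(1,|y|²) dν < ∞. -/
def IsSymmLevy {n : ℕ} (ν : Measure (Eucl n)) : Prop :=
  ν {0} = 0 ∧ (∀ A : Set (Eucl n), MeasurableSet A → ν (-A) = ν A) ∧
    (∫⁻ y, ENNReal.ofReal (min 1 (‖y‖ ^ 2)) ∂ν) < ⊤

/-- The truncated nonlocal operator: ∫_{|y| ≥ ε} (u(x) − u(x+y)) dν(y). -/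
def truncL {n : ℕ} (ν : Measure (Eucl n)) (u : Eucl n → ℝ) (x : Eucl n) (ε : ℝ) : ℝ :=
  ∫ y in {y : Eucl n | ε ≤ ‖y‖}, (u x - u (x + y)) ∂ν

/-- `Lu(x)` is well defined with value `l`: the integrands are ν-integrable away from the
origin, and the principal value limit exists and equals `l`. -/
def HasLAt {n : ℕ} (ν : Measure (Eucl n)) (u : Eucl n → ℝ) (x : Eucl n) (l : ℝ) : Prop :=
  (∀ ε : ℝ, 0 < ε → IntegrableOn (fun y => u x - u (x + y)) {y : Eucl n | ε ≤ ‖y‖} ν) ∧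
  Tendsto (truncL ν u x) (𝓝[>] (0:ℝ)) (𝓝 l)

/-- Squared norm of the generalized Sobolev space V_ν^D(ℝⁿ). -/
def sobSq {n : ℕ} (ν : Measure (Eucl n)) (D : Set (Eucl n)) (u : Eucl n → ℝ) : ℝ≥0∞ :=
  (∫⁻ x in D, ENNReal.ofReal (u x ^ 2)) +
    (1/2) * ∫⁻ y in D, ∫⁻ z, ENNReal.ofReal ((u y - u (y + z)) ^ 2) ∂ν

/-- Membership in V_ν^D(ℝⁿ). -/
def MemV {n : ℕ} (ν : Measure (Eucl n)) (D : Set (Eucl n)) (u : Eucl n → ℝ) : Prop :=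
  Measurable u ∧ sobSq ν D u < ⊤

/-- Membership in H_ν^D(ℝⁿ): members of V_ν^D vanishing a.e. outside D. -/
def MemH {n : ℕ} (ν : Measure (Eucl n)) (D : Set (Eucl n)) (u : Eucl n → ℝ) : Prop :=
  MemV ν D u ∧ ∀ᵐ x ∂(volume : Measure (Eucl n)), x ∉ D → u x = 0

/-- The quadratic form ⟨u,u⟩_ν (with values in [0,∞]). -/
def formQ {n : ℕ} (ν : Measure (Eucl n)) (u : Eucl n → ℝ) : ℝ≥0∞ :=
  (1/2) * ∫⁻ y, ∫⁻ z, ENNReal.ofReal ((u y - u (y + z)) ^ 2) ∂ν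

/-- The bilinear form ⟨u,v⟩_ν. -/
def formB {n : ℕ} (ν : Measure (Eucl n)) (u v : Eucl n → ℝ) : ℝ :=
  (1/2) * ∫ y, (∫ z, (u y - u (y + z)) * (v y - v (y + z)) ∂ν)

/-- Weak solution of Lu = f in Ω, u = g on ℝⁿ∖Ω. -/
def IsWeakSol {n : ℕ} (ν : Measure (Eucl n)) (Ω : Set (Eucl n))
    (f g u : Eucl n → ℝ) : Prop :=
  MemV ν Ω u ∧ (∀ᵐ x ∂(volume : Measure (Eucl n)), x ∉ Ω → u x = g x) ∧
  ∀ φ : Eucl n → ℝ, MemH ν Ω φ → formB ν u φ = ∫ x in Ω, f x * φ x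

end

section Aux

open MeasureTheory

variable {n : ℕ}

lemma levy_fin {ν : Measure (Eucl n)} (hν : IsSymmLevy ν) {ε : ℝ} (hε : 0 < ε) :
    ν {y : Eucl n | ε ≤ ‖y‖} < ⊤ := by
  set c : ℝ≥0∞ := ENNReal.ofReal (min 1 (ε ^ 2)) with hc
  have hc0 : c ≠ 0 := by
    simp only [hc, ne_eq, ENNReal.ofReal_eq_zero, not_le, lt_min_iff]
    exact ⟨one_pos, pow_pos hε 2⟩
  by_contra h
  have hS : ν {y : Eucl n | ε ≤ ‖y‖} = ⊤ := by
    simpa [lt_top_iff_ne_top, not_not] using h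
  have h1 : c * ν {y : Eucl n | ε ≤ ‖y‖} ≤ ∫⁻ y, ENNReal.ofReal (min 1 (‖y‖ ^ 2)) ∂ν := by
    calc c * ν {y : Eucl n | ε ≤ ‖y‖}
        = ∫⁻ _ in {y : Eucl n | ε ≤ ‖y‖}, c ∂ν := by
          rw [setLIntegral_const, mul_comm]
      _ ≤ ∫⁻ y in {y : Eucl n | ε ≤ ‖y‖}, ENNReal.ofReal (min 1 (‖y‖ ^ 2)) ∂ν := by
          refine setLIntegral_mono (by measurability) fun x hx => ?_
          exact ENNReal.ofReal_le_ofReal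
            (min_le_min le_rfl (pow_le_pow_left₀ hε.le hx 2))
      _ ≤ _ := setLIntegral_le_lintegral _ _
  rw [hS, ENNReal.mul_top hc0] at h1
  exact hν.2.2.ne (top_le_iff.mp h1)

lemma levy_sigmaFinite {ν : Measure (Eucl n)} (hν : IsSymmLevy ν) : SigmaFinite ν := by
  refine ⟨⟨⟨fun k => {0} ∪ {y : Eucl n | 1/(k+1 : ℝ) ≤ ‖y‖}, fun _ => trivial, ?_, ?_⟩⟩⟩
  · intro k
    have h2 := levy_fin hν (ε := 1/(k+1 : ℝ)) (by positivity)
    calc ν ({0} ∪ {y : Eucl n | 1/(k+1 : ℝ) ≤ ‖y‖})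
        ≤ ν {0} + ν {y : Eucl n | 1/(k+1 : ℝ) ≤ ‖y‖} := measure_union_le _ _
      _ < ⊤ := by rw [hν.1, zero_add]; exact h2
  · apply eq_univ_iff_forall.mpr
    intro y
    rcases eq_or_ne y 0 with h | h
    · exact mem_iUnion.mpr ⟨0, Or.inl (by simp [h])⟩
    · have hy : 0 < ‖y‖ := norm_pos_iff.mpr h
      obtain ⟨k, hk⟩ := exists_nat_gt (1/‖y‖)
      refine mem_iUnion.mpr ⟨k, Or.inr ?_⟩
      have h1 : 1/‖y‖ < (k:ℝ) + 1 := hk.trans (lt_add_one _)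
      have : 1/((k:ℝ)+1) < ‖y‖ := by
        rw [div_lt_iff₀ (by positivity)]
        rw [div_lt_iff₀ hy] at h1
        nlinarith
      exact this.le

lemma levy_map_neg {ν : Measure (Eucl n)} (hν : IsSymmLevy ν) :
    ν.map (fun z : Eucl n => -z) = ν := by
  ext A hA
  rw [Measure.map_apply measurable_neg hA]
  have h : (fun z : Eucl n => -z) ⁻¹' A = -A := by
    ext x; simp [Set.mem_neg]
  rw [h, hν.2.1 A hA]

lemma lintegral_neg_levy {ν : Measure (Eucl n)} (hν : IsSymmLevy ν) {g : Eucl n → ℝ≥0∞}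
    (hg : Measurable g) : ∫⁻ z, g (-z) ∂ν = ∫⁻ z, g z ∂ν := by
  conv_rhs => rw [← levy_map_neg hν]
  rw [lintegral_map hg measurable_neg]

lemma ae_ae_notin {ν : Measure (Eucl n)} [SigmaFinite ν] {N : Set (Eucl n)}
    (hNm : MeasurableSet N) (hN : volume N = 0) :
    ∀ᵐ y ∂(volume : Measure (Eucl n)), ∀ᵐ z ∂ν, y + z ∉ N := by
  have hm : Measurable fun p : Eucl n × Eucl n =>
      N.indicator (fun _ => (1:ℝ≥0∞)) (p.1 + p.2) :=
    (measurable_const.indicator hNm).comp (measurable_fst.add measurable_snd)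
  have key : ∫⁻ y, ∫⁻ z, N.indicator (fun _ => (1:ℝ≥0∞)) (y + z) ∂ν ∂volume = 0 := by
    rw [lintegral_lintegral_swap hm.aemeasurable]
    have h1 : ∀ z : Eucl n,
        ∫⁻ y, N.indicator (fun _ => (1:ℝ≥0∞)) (y + z) ∂volume = 0 := by
      intro z
      rw [lintegral_add_right_eq_self (N.indicator fun _ => (1:ℝ≥0∞)) z,
        lintegral_indicator hNm]
      simp [hN]
    simp [h1]
  have hmeas : Measurable fun y : Eucl n =>
      ∫⁻ z, N.indicator (fun _ => (1:ℝ≥0∞)) (y + z) ∂ν :=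
    hm.lintegral_prod_right'
  have h0 := (lintegral_eq_zero_iff hmeas).mp key
  filter_upwards [h0] with y hy
  have hset : (fun z : Eucl n => N.indicator (fun _ => (1:ℝ≥0∞)) (y + z))
      = {z : Eucl n | y + z ∈ N}.indicator (fun _ => (1:ℝ≥0∞)) := by
    funext z
    by_cases hz : y + z ∈ N
    · simp [Set.indicator_of_mem, hz]
    · simp [Set.indicator_of_notMem, hz]
  have hNz : ν {z : Eucl n | y + z ∈ N} = 0 := by
    have hms : MeasurableSet {z : Eucl n | y + z ∈ N} :=
      (measurable_const_add y) hNm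
    have h2 : ∫⁻ z in {z : Eucl n | y + z ∈ N}, (1:ℝ≥0∞) ∂ν = 0 := by
      rw [← lintegral_indicator hms, ← hset]
      simpa using hy
    simpa using h2
  rw [ae_iff]
  simpa using hNz

end Aux

section Aux2

open MeasureTheory

variable {n : ℕ}

lemma eng_compl_le {ν : Measure (Eucl n)} (hν : IsSymmLevy ν) [SigmaFinite ν]
    {S : Set (Eucl n)} (hS : MeasurableSet S) {ψ : Eucl n → ℝ} (hm : Measurable ψ)
    (h0 : ∀ x, x ∉ S → ψ x = 0) :
    ∫⁻ y in Sᶜ, ∫⁻ z, ENNReal.ofReal ((ψ y - ψ (y + z)) ^ 2) ∂ν ≤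
      ∫⁻ y in S, ∫⁻ z, ENNReal.ofReal ((ψ y - ψ (y + z)) ^ 2) ∂ν := by
  set Q : Eucl n → ℝ≥0∞ := fun w => ENNReal.ofReal (ψ w ^ 2) with hQ
  have hQm : Measurable Q := ((hm.pow_const 2)).ennreal_ofReal
  set F : Eucl n → Eucl n → ℝ≥0∞ :=
    fun y z => Sᶜ.indicator (fun _ => (1:ℝ≥0∞)) y * Q (y + z) with hF
  have hFm : Measurable fun p : Eucl n × Eucl n => F p.1 p.2 :=
    ((measurable_const.indicator hS.compl).comp measurable_fst).mul
      (hQm.comp (measurable_fst.add measurable_snd))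
  have step1 : ∫⁻ y in Sᶜ, ∫⁻ z, ENNReal.ofReal ((ψ y - ψ (y + z)) ^ 2) ∂ν
      = ∫⁻ y, ∫⁻ z, F y z ∂ν ∂volume := by
    rw [← lintegral_indicator hS.compl]
    refine lintegral_congr fun y => ?_
    by_cases hy : y ∈ Sᶜ
    · rw [Set.indicator_of_mem hy]
      refine lintegral_congr fun z => ?_
      rw [hF]; simp only []
      rw [Set.indicator_of_mem hy, one_mul, h0 y hy, hQ]
      norm_num
    · rw [Set.indicator_of_notMem hy]
      have : ∀ z, F y z = 0 := fun z => by
        rw [hF]; simp only []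
        rw [Set.indicator_of_notMem hy, zero_mul]
      simp [this]
  set G : Eucl n → Eucl n → ℝ≥0∞ :=
    fun z w => Sᶜ.indicator (fun _ => (1:ℝ≥0∞)) (w - z) * Q w with hG
  have hGm : Measurable fun p : Eucl n × Eucl n => G p.1 p.2 :=
    ((measurable_const.indicator hS.compl).comp (measurable_snd.sub measurable_fst)).mul
      (hQm.comp measurable_snd)
  have step2 : ∫⁻ y, ∫⁻ z, F y z ∂ν ∂volume = ∫⁻ z, ∫⁻ w, G z w ∂volume ∂ν := by
    rw [lintegral_lintegral_swap hFm.aemeasurable]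
    refine lintegral_congr fun z => ?_
    rw [← lintegral_add_right_eq_self (fun w => G z w) z]
    refine lintegral_congr fun y => ?_
    rw [hF, hG]; simp only []
    rw [add_sub_cancel_right]
  set G' : Eucl n → Eucl n → ℝ≥0∞ :=
    fun z w => Sᶜ.indicator (fun _ => (1:ℝ≥0∞)) (w + z) * Q w with hG'
  have hG'm : Measurable fun p : Eucl n × Eucl n => G' p.1 p.2 :=
    ((measurable_const.indicator hS.compl).comp (measurable_snd.add measurable_fst)).mul
      (hQm.comp measurable_snd)
  have step3 : ∫⁻ z, ∫⁻ w, G z w ∂volume ∂ν = ∫⁻ z, ∫⁻ w, G' z w ∂volume ∂ν := by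
    have hmg : Measurable fun z => ∫⁻ w, G' z w ∂volume := hG'm.lintegral_prod_right'
    rw [← lintegral_neg_levy hν hmg]
    refine lintegral_congr fun z => ?_
    refine lintegral_congr fun w => ?_
    rw [hG, hG']; simp only []
    rw [sub_eq_add_neg]
  have step4 : ∫⁻ z, ∫⁻ w, G' z w ∂volume ∂ν = ∫⁻ w, ∫⁻ z, G' z w ∂ν ∂volume :=
    lintegral_lintegral_swap hG'm.aemeasurable
  have step5 : ∫⁻ w, ∫⁻ z, G' z w ∂ν ∂volume ≤
      ∫⁻ y in S, ∫⁻ z, ENNReal.ofReal ((ψ y - ψ (y + z)) ^ 2) ∂ν := by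
    rw [← lintegral_indicator hS]
    refine lintegral_mono fun w => ?_
    by_cases hw : w ∈ S
    · rw [Set.indicator_of_mem hw]
      refine lintegral_mono fun z => ?_
      rw [hG']; simp only []
      by_cases hwz : w + z ∈ Sᶜ
      · rw [Set.indicator_of_mem hwz, one_mul, hQ]
        rw [h0 (w + z) hwz]
        norm_num
      · rw [Set.indicator_of_notMem hwz, zero_mul]
        exact zero_le
    · rw [Set.indicator_of_notMem hw]
      have : ∀ z, G' z w = 0 := fun z => by
        rw [hG']; simp only []
        rw [hQ]; simp only []
        rw [h0 w hw]
        norm_num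
      simp [this]
  calc ∫⁻ y in Sᶜ, ∫⁻ z, ENNReal.ofReal ((ψ y - ψ (y + z)) ^ 2) ∂ν
      = ∫⁻ z, ∫⁻ w, G' z w ∂volume ∂ν := by rw [step1, step2, step3]
    _ = ∫⁻ w, ∫⁻ z, G' z w ∂ν ∂volume := step4
    _ ≤ _ := step5

end Aux2

theorem dirichlet_stmt12 {n : ℕ} (ν : Measure (Eucl n)) (hν : IsSymmLevy ν)
    (Ω Ω' : Set (Eucl n)) (hsub : Ω' ⊆ Ω)
    (hΩo : IsOpen Ω) (hΩne : Ω.Nonempty) (hΩb : Bornology.IsBounded Ω)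
    (hΩ'o : IsOpen Ω') (hΩ'ne : Ω'.Nonempty)
    (f : Eucl n → ℝ) (hf : MemLp f 2 ((volume : Measure (Eucl n)).restrict Ω))
    (u : Eucl n → ℝ) (hu : MemV ν Ω u)
    (hsol : ∀ φ : Eucl n → ℝ, MemH ν Ω φ → formB ν u φ = ∫ x in Ω, f x * φ x) :
    MemV ν Ω' u ∧
      ∀ ψ : Eucl n → ℝ, MemH ν Ω' ψ → formB ν u ψ = ∫ x in Ω', f x * ψ x := by
  haveI : SigmaFinite ν := levy_sigmaFinite hν
  constructor
  · -- u ∈ V_ν^{Ω'}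
    refine ⟨hu.1, lt_of_le_of_lt ?_ hu.2⟩
    unfold sobSq
    have hres : (volume : Measure (Eucl n)).restrict Ω' ≤ volume.restrict Ω :=
      Measure.restrict_mono hsub le_rfl
    exact add_le_add (lintegral_mono' hres le_rfl)
      (mul_le_mul_right (lintegral_mono' hres le_rfl) _)
  · intro ψ hψ
    obtain ⟨⟨hψm, hψsob⟩, hψ0⟩ := hψ
    set ψ' : Eucl n → ℝ := Ω'.indicator ψ with hψ'
    have hψ'm : Measurable ψ' := hψm.indicator hΩ'o.measurableSet
    -- the exceptional set
    set N : Set (Eucl n) := {x | ψ x ≠ ψ' x} with hN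
    have hNm : MeasurableSet N := (measurableSet_eq_fun hψm hψ'm).compl
    have haeeq : ∀ᵐ x ∂(volume : Measure (Eucl n)), ψ x = ψ' x := by
      filter_upwards [hψ0] with x hx
      by_cases hmem : x ∈ Ω'
      · rw [hψ', Set.indicator_of_mem hmem]
      · rw [hψ', Set.indicator_of_notMem hmem, hx hmem]
    have hNnull : volume N = 0 := by
      rw [← ae_iff] at *
      simpa [hN, ae_iff] using haeeq
    have hkey : ∀ᵐ y ∂(volume : Measure (Eucl n)),
        ψ y = ψ' y ∧ ∀ᵐ z ∂ν, ψ (y + z) = ψ' (y + z) := by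
      filter_upwards [haeeq, ae_ae_notin (ν := ν) hNm hNnull] with y h1 h2
      refine ⟨h1, ?_⟩
      filter_upwards [h2] with z hz
      simpa [hN, Set.mem_setOf_eq, not_not] using hz
    -- ψ' vanishes outside Ω' pointwise
    have hψ'0 : ∀ x, x ∉ Ω' → ψ' x = 0 := fun x hx => Set.indicator_of_notMem hx _
    -- energy of ψ' over Ω' equals that of ψ
    have hEng : ∫⁻ y in Ω', ∫⁻ z, ENNReal.ofReal ((ψ' y - ψ' (y + z)) ^ 2) ∂ν
        = ∫⁻ y in Ω', ∫⁻ z, ENNReal.ofReal ((ψ y - ψ (y + z)) ^ 2) ∂ν := by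
      refine lintegral_congr_ae (ae_restrict_of_ae ?_)
      filter_upwards [hkey] with y hy
      refine lintegral_congr_ae ?_
      filter_upwards [hy.2] with z hz
      rw [hy.1, hz]
    have hEngΩ' : ∫⁻ y in Ω', ∫⁻ z, ENNReal.ofReal ((ψ' y - ψ' (y + z)) ^ 2) ∂ν < ⊤ := by
      rw [hEng]
      have h2 := hψsob
      unfold sobSq at h2
      have := (lt_of_le_of_lt (le_add_self) h2)
      by_contra htop
      rw [not_lt, top_le_iff] at htop
      rw [htop] at this
      simp at this
    -- ψ' ∈ H_ν^Ω
    have hψ'H : MemH ν Ω ψ' := by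
      refine ⟨⟨hψ'm, ?_⟩, Filter.Eventually.of_forall fun x hx => hψ'0 x fun h => hx (hsub h)⟩
      unfold sobSq
      have hA : (∫⁻ x in Ω, ENNReal.ofReal (ψ' x ^ 2))
          = ∫⁻ x in Ω', ENNReal.ofReal (ψ x ^ 2) := by
        have heq : ∀ x, ENNReal.ofReal (ψ' x ^ 2)
            = Ω'.indicator (fun x => ENNReal.ofReal (ψ x ^ 2)) x := by
          intro x
          by_cases hx : x ∈ Ω'
          · rw [hψ', Set.indicator_of_mem hx, Set.indicator_of_mem hx]
          · rw [hψ', Set.indicator_of_notMem hx, Set.indicator_of_notMem hx]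
            norm_num
        simp_rw [heq]
        rw [lintegral_indicator hΩ'o.measurableSet, Measure.restrict_restrict
          hΩ'o.measurableSet, Set.inter_eq_self_of_subset_left hsub]
      have hAfin : (∫⁻ x in Ω, ENNReal.ofReal (ψ' x ^ 2)) < ⊤ := by
        rw [hA]
        have h2 := hψsob
        unfold sobSq at h2
        exact lt_of_le_of_lt le_add_self (by rwa [add_comm] at h2)
      have hBfin : (∫⁻ y in Ω, ∫⁻ z, ENNReal.ofReal ((ψ' y - ψ' (y + z)) ^ 2) ∂ν) < ⊤ := by
        have hle : (∫⁻ y in Ω, ∫⁻ z, ENNReal.ofReal ((ψ' y - ψ' (y + z)) ^ 2) ∂ν)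
            ≤ (∫⁻ y in Ω', ∫⁻ z, ENNReal.ofReal ((ψ' y - ψ' (y + z)) ^ 2) ∂ν)
              + ∫⁻ y in Ω'ᶜ, ∫⁻ z, ENNReal.ofReal ((ψ' y - ψ' (y + z)) ^ 2) ∂ν :=
          calc (∫⁻ y in Ω, ∫⁻ z, ENNReal.ofReal ((ψ' y - ψ' (y + z)) ^ 2) ∂ν)
              ≤ ∫⁻ y, ∫⁻ z, ENNReal.ofReal ((ψ' y - ψ' (y + z)) ^ 2) ∂ν ∂volume :=
                setLIntegral_le_lintegral _ _
            _ = _ := (lintegral_add_compl _ hΩ'o.measurableSet).symm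
        have hcompl := eng_compl_le hν hΩ'o.measurableSet hψ'm hψ'0
        exact lt_of_le_of_lt (hle.trans (add_le_add le_rfl hcompl))
          (by simpa using ENNReal.add_lt_top.mpr ⟨hEngΩ', hEngΩ'⟩)
      refine ENNReal.add_lt_top.mpr ⟨hAfin, ?_⟩
      exact ENNReal.mul_lt_top (by norm_num) hBfin
    -- conclude
    have hform : formB ν u ψ = formB ν u ψ' := by
      unfold formB
      congr 1
      refine integral_congr_ae ?_
      filter_upwards [hkey] with y hy
      refine integral_congr_ae ?_
      filter_upwards [hy.2] with z hz
      rw [hy.1, hz]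
    have hint : ∫ x in Ω, f x * ψ' x = ∫ x in Ω', f x * ψ x := by
      have heq : ∀ x, f x * ψ' x = Ω'.indicator (fun x => f x * ψ x) x := by
        intro x
        by_cases hx : x ∈ Ω'
        · rw [hψ', Set.indicator_of_mem hx, Set.indicator_of_mem hx]
        · rw [hψ', Set.indicator_of_notMem hx, Set.indicator_of_notMem hx, mul_zero]
      simp_rw [heq]
      rw [setIntegral_indicator hΩ'o.measurableSet,
        Set.inter_eq_self_of_subset_right hsub]
    rw [hform, hsol ψ' hψ'H, hint]
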